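/- For all 0 ≤ m < n, the recurrence c_{m,n} = (1−α_m) c_{m−1,n} + (1−α_n) c_{m,n−1} + (α_n α_m − (1−α_n)(1−α_m)) c_{m−1,n−1} holds. -/

import Mathlib

open Finset

private lemma key1 (α : ℕ → ℝ) (f : ℕ → ℝ) (a n' : ℕ) (h : a ≤ n' + 1) :
    ∑ k ∈ Finset.Icc a (n' + 1), (α k * ∏ i ∈ Finset.Icc (k + 1) (n' + 1), (1 - α i)) * f k
      = (1 - α (n' + 1)) *
          ∑ k ∈ Finset.Icc a n', (α k * ∏ i ∈ Finset.Icc (k + 1) n', (1 - α i)) * f k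
        + α (n' + 1) * f (n' + 1) := by
  rw [Finset.sum_Icc_succ_top h, Finset.mul_sum]
  congr 1
  · apply Finset.sum_congr rfl
    intro k hk
    have hk' : k + 1 ≤ n' + 1 := by
      have := (Finset.mem_Icc.mp hk).2; omega
    rw [Finset.prod_Icc_succ_top hk']
    ring
  · rw [Finset.Icc_eq_empty (by omega), Finset.prod_empty]
    ring

private lemma double_step (α : ℕ → ℝ) (c : ℤ → ℤ → ℝ) (m n' : ℕ) (h : m + 1 ≤ n' + 1) :
    ∑ j ∈ Finset.range (m + 1), ∑ k ∈ Finset.Icc (m + 1) (n' + 1),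
        (α j * ∏ i ∈ Finset.Icc (j + 1) m, (1 - α i)) *
          (α k * ∏ i ∈ Finset.Icc (k + 1) (n' + 1), (1 - α i)) *
            c ((j : ℤ) - 1) ((k : ℤ) - 1)
      = (1 - α (n' + 1)) *
          ∑ j ∈ Finset.range (m + 1), ∑ k ∈ Finset.Icc (m + 1) n',
            (α j * ∏ i ∈ Finset.Icc (j + 1) m, (1 - α i)) *
              (α k * ∏ i ∈ Finset.Icc (k + 1) n', (1 - α i)) *
                c ((j : ℤ) - 1) ((k : ℤ) - 1)
        + α (n' + 1) *
          ∑ j ∈ Finset.range (m + 1),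
            (α j * ∏ i ∈ Finset.Icc (j + 1) m, (1 - α i)) * c ((j : ℤ) - 1) (n' : ℤ) := by
  rw [Finset.mul_sum, Finset.mul_sum, ← Finset.sum_add_distrib]
  apply Finset.sum_congr rfl
  intro j _
  have h1 := key1 α
    (fun k => (α j * ∏ i ∈ Finset.Icc (j + 1) m, (1 - α i)) * c ((j : ℤ) - 1) ((k : ℤ) - 1))
    (m + 1) n' h
  simp only [Nat.cast_add, Nat.cast_one, add_sub_cancel_right] at h1
  have h2 : ∑ k ∈ Finset.Icc (m + 1) (n' + 1),
      (α j * ∏ i ∈ Finset.Icc (j + 1) m, (1 - α i)) *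
        (α k * ∏ i ∈ Finset.Icc (k + 1) (n' + 1), (1 - α i)) *
          c ((j : ℤ) - 1) ((k : ℤ) - 1)
      = ∑ k ∈ Finset.Icc (m + 1) (n' + 1),
        (α k * ∏ i ∈ Finset.Icc (k + 1) (n' + 1), (1 - α i)) *
          ((α j * ∏ i ∈ Finset.Icc (j + 1) m, (1 - α i)) * c ((j : ℤ) - 1) ((k : ℤ) - 1)) :=
    Finset.sum_congr rfl fun k _ => by ring
  have h3 : ∑ k ∈ Finset.Icc (m + 1) n',
      (α k * ∏ i ∈ Finset.Icc (k + 1) n', (1 - α i)) *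
        ((α j * ∏ i ∈ Finset.Icc (j + 1) m, (1 - α i)) * c ((j : ℤ) - 1) ((k : ℤ) - 1))
      = ∑ k ∈ Finset.Icc (m + 1) n',
        (α j * ∏ i ∈ Finset.Icc (j + 1) m, (1 - α i)) *
          (α k * ∏ i ∈ Finset.Icc (k + 1) n', (1 - α i)) *
            c ((j : ℤ) - 1) ((k : ℤ) - 1) :=
    Finset.sum_congr rfl fun k _ => by ring
  rw [h2, h1, h3]

private lemma T_step (α : ℕ → ℝ) (g : ℕ → ℝ) (m' : ℕ) :
    ∑ j ∈ Finset.range (m' + 1 + 1),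
        (α j * ∏ i ∈ Finset.Icc (j + 1) (m' + 1), (1 - α i)) * g j
      = (1 - α (m' + 1)) *
          ∑ j ∈ Finset.range (m' + 1),
            (α j * ∏ i ∈ Finset.Icc (j + 1) m', (1 - α i)) * g j
        + α (m' + 1) * g (m' + 1) := by
  rw [Finset.sum_range_succ, Finset.mul_sum]
  congr 1
  · apply Finset.sum_congr rfl
    intro j hj
    have hj' : j + 1 ≤ m' + 1 := by
      have := Finset.mem_range.mp hj; omega
    rw [Finset.prod_Icc_succ_top hj']
    ring
  · rw [Finset.Icc_eq_empty (by omega), Finset.prod_empty]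
    ring

/-- For `0 ≤ m < n` the quantities `c_{m,n}` satisfy the recurrence
`c_{m,n} = (1−α_m) c_{m−1,n} + (1−α_n) c_{m,n−1} + (α_n α_m − (1−α_n)(1−α_m)) c_{m−1,n−1}`. -/
theorem c_alternative_recurrence
    (α : ℕ → ℝ) (hα0 : α 0 = 1) (hα : ∀ k, α k ∈ Set.Icc (0:ℝ) 1)
    (c : ℤ → ℤ → ℝ)
    (hc1 : ∀ n : ℕ, c (-1) n = 1)
    (hcr : ∀ m n : ℕ, m ≤ n →
      c m n = ∑ j ∈ Finset.range (m + 1), ∑ k ∈ Finset.Icc (m + 1) n,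
        (α j * ∏ i ∈ Finset.Icc (j + 1) m, (1 - α i)) *
          (α k * ∏ i ∈ Finset.Icc (k + 1) n, (1 - α i)) *
            c ((j : ℤ) - 1) ((k : ℤ) - 1))
    (m n : ℕ) (hmn : m < n) :
    c m n = (1 - α m) * c ((m : ℤ) - 1) n + (1 - α n) * c m ((n : ℤ) - 1)
      + (α n * α m - (1 - α n) * (1 - α m)) * c ((m : ℤ) - 1) ((n : ℤ) - 1) := by
  obtain ⟨n', rfl⟩ : ∃ n', n = n' + 1 := ⟨n - 1, by omega⟩
  -- Step 1: split off the top index `n'+1` from the `k`-sum.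
  have hE1 : c m ((n' + 1 : ℕ) : ℤ)
      = (1 - α (n' + 1)) * c m (n' : ℤ)
        + α (n' + 1) *
          ∑ j ∈ Finset.range (m + 1),
            (α j * ∏ i ∈ Finset.Icc (j + 1) m, (1 - α i)) * c ((j : ℤ) - 1) (n' : ℤ) := by
    rw [hcr m (n' + 1) (by omega), double_step α c m n' (by omega),
      ← hcr m n' (by omega)]
  cases m with
  | zero =>
      have hT : ∑ j ∈ Finset.range 1,
          (α j * ∏ i ∈ Finset.Icc (j + 1) 0, (1 - α i)) * c ((j : ℤ) - 1) (n' : ℤ) = 1 := by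
        rw [Finset.sum_range_one, Finset.Icc_eq_empty (by omega), Finset.prod_empty, hα0]
        have : ((0 : ℕ) : ℤ) - 1 = -1 := by norm_num
        rw [this, hc1 n']
        ring
      rw [hT] at hE1
      have h0 : ((0 : ℕ) : ℤ) - 1 = -1 := by norm_num
      have hn1 : ((n' + 1 : ℕ) : ℤ) - 1 = (n' : ℤ) := by push_cast; ring
      rw [h0, hn1, hc1 (n' + 1), hc1 n', hα0, hE1]
      ring
  | succ m' =>
      have hm : m' + 1 ≤ n' := by omega
      -- Step 2: split off the top index `m'+1` from the `j`-sum.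
      have hE2 := T_step α (fun j => c ((j : ℤ) - 1) (n' : ℤ)) m'
      simp only [Nat.cast_add, Nat.cast_one, add_sub_cancel_right] at hE2
      -- Step 3: the same splitting for `c m' (n'+1)`.
      have hE3 : c m' ((n' + 1 : ℕ) : ℤ)
          = (1 - α (n' + 1)) * c m' (n' : ℤ)
            + α (n' + 1) *
              ∑ j ∈ Finset.range (m' + 1),
                (α j * ∏ i ∈ Finset.Icc (j + 1) m', (1 - α i)) * c ((j : ℤ) - 1) (n' : ℤ) := by
        rw [hcr m' (n' + 1) (by omega), double_step α c m' n' (by omega),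
          ← hcr m' n' (by omega)]
      have hn1 : ((n' + 1 : ℕ) : ℤ) - 1 = (n' : ℤ) := by push_cast; ring
      have hm1 : ((m' + 1 : ℕ) : ℤ) - 1 = (m' : ℤ) := by push_cast; ring
      rw [hn1, hm1]
      rw [hE2] at hE1
      linear_combination hE1 - (1 - α (m' + 1)) * hE3
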